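/- Let M, N ∈ Mat_{r×s}(ℂ) and ε ≥ 0 satisfy ‖MM† − NN†‖₁ ≤ 2√2·ε, and suppose for every unit vector (u,v) ∈ ℂ² we have ‖(uM+vN)(uM+vN)† − NN†‖₁ ≤ 2√2·ε. Then ‖MN†‖₁ ≤ 6√2·ε and ‖NM†‖₁ ≤ 6√2·ε. -/

import Mathlib

open Matrix Complex
open scoped ComplexOrder Classical

noncomputable def matSqrt {n : Type*} [Fintype n] [DecidableEq n]
    (A : Matrix n n ℂ) : Matrix n n ℂ :=
  if h : A.PosSemidef then
    (h.1.eigenvectorUnitary : Matrix n n ℂ) *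
      diagonal ((↑) ∘ Real.sqrt ∘ h.1.eigenvalues) *
      (star h.1.eigenvectorUnitary : Matrix n n ℂ)
  else 0

noncomputable def traceNorm {m n : Type*} [Fintype m] [Fintype n] [DecidableEq n]
    (A : Matrix m n ℂ) : ℝ :=
  ((matSqrt (Aᴴ * A)).trace).re

noncomputable def frobNorm {m n : Type*} [Fintype m] [Fintype n]
    (A : Matrix m n ℂ) : ℝ :=
  Real.sqrt (((Aᴴ * A).trace).re)

noncomputable def fidelity {n : Type*} [Fintype n] [DecidableEq n]
    (P Q : Matrix n n ℂ) : ℝ :=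
  ((matSqrt (matSqrt P * Q * matSqrt P)).trace).re

/-- The outer product |ψ⟩⟨ψ| of a vector. -/
noncomputable def outerMat {ι : Type*} (ψ : ι → ℂ) : Matrix ι ι ℂ :=
  fun p q => ψ p * (starRingEnd ℂ) (ψ q)

/-- Partial trace over the first (A) factor. -/
noncomputable def ptraceA {r s : ℕ} (ρ : Matrix (Fin r × Fin s) (Fin r × Fin s) ℂ) :
    Matrix (Fin s) (Fin s) ℂ :=
  fun k l => ∑ i : Fin r, ρ (i, k) (i, l)

/-- Partial trace over the second (B) factor. -/
noncomputable def ptraceB {r s : ℕ} (ρ : Matrix (Fin r × Fin s) (Fin r × Fin s) ℂ) :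
    Matrix (Fin r) (Fin r) ℂ :=
  fun i j => ∑ k : Fin s, ρ (i, k) (j, k)

section Aux

variable {m n : Type*} [Fintype m] [Fintype n] [DecidableEq n]

lemma matSqrt_eq {A : Matrix n n ℂ} (h : A.PosSemidef) : matSqrt A =
    (h.1.eigenvectorUnitary : Matrix n n ℂ) *
      diagonal ((↑) ∘ Real.sqrt ∘ h.1.eigenvalues) *
      (star h.1.eigenvectorUnitary : Matrix n n ℂ) := dif_pos h

lemma matSqrt_eq_cfc {A : Matrix n n ℂ} (h : A.PosSemidef) : matSqrt A = cfc Real.sqrt A := by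
  rw [h.1.cfc_eq, Matrix.IsHermitian.cfc, Unitary.conjStarAlgAut_apply, matSqrt, dif_pos h]
  rfl

lemma traceNorm_eq_sum (B : Matrix m n ℂ) :
    traceNorm B = ∑ i, Real.sqrt ((Matrix.posSemidef_conjTranspose_mul_self B).1.eigenvalues i) := by
  have hP := Matrix.posSemidef_conjTranspose_mul_self B
  rw [traceNorm, matSqrt_eq hP, Matrix.trace_mul_cycle,
    Unitary.coe_star_mul_self, one_mul, Matrix.trace_diagonal]
  push_cast
  simp

lemma dot_cs (x y : n → ℂ) : ‖(dotProduct (star x) y)‖ ≤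
    Real.sqrt ((dotProduct (star x) x).re) * Real.sqrt ((dotProduct (star y) y).re) := by
  have h := norm_inner_le_norm (𝕜 := ℂ) (WithLp.toLp 2 x : EuclideanSpace ℂ n) (WithLp.toLp 2 y : EuclideanSpace ℂ n)
  rw [norm_eq_sqrt_re_inner (𝕜 := ℂ) (WithLp.toLp 2 x : EuclideanSpace ℂ n),
    norm_eq_sqrt_re_inner (𝕜 := ℂ) (WithLp.toLp 2 y : EuclideanSpace ℂ n)] at h
  simp only [EuclideanSpace.inner_eq_star_dotProduct, WithLp.ofLp_toLp] at h
  rw [dotProduct_comm y, dotProduct_comm x, dotProduct_comm y] at h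
  simpa using h

lemma trace_conj_entry (Q C : Matrix n n ℂ) (i : n) :
    (Qᴴ * C * Q) i i = dotProduct (star (fun a => Q a i)) (C *ᵥ (fun a => Q a i)) := by
  simp only [Matrix.mul_apply, Matrix.mulVec, dotProduct, Matrix.conjTranspose_apply,
    Finset.sum_mul, Finset.mul_sum, Pi.star_apply]
  rw [Finset.sum_comm]
  exact Finset.sum_congr rfl fun a _ => Finset.sum_congr rfl fun b _ => by ring

lemma re_trace_mul_le (W B : Matrix n n ℂ)
    (hW : ∀ v : n → ℂ, ((star (Wᴴ *ᵥ v)) ⬝ᵥ (Wᴴ *ᵥ v)).re ≤ ((star v) ⬝ᵥ v).re) :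
    (Matrix.trace (W * B)).re ≤ traceNorm B := by
  have hP := Matrix.posSemidef_conjTranspose_mul_self B
  have hd : ∀ i, 0 ≤ hP.1.eigenvalues i := hP.eigenvalues_nonneg
  set q : n → (n → ℂ) := fun i => ⇑(hP.1.eigenvectorBasis i) with hq
  have hqq : ∀ i, ((star (q i)) ⬝ᵥ (q i)).re = 1 := by
    intro i
    have := hP.1.eigenvectorBasis.orthonormal.1 i
    have h2 : (inner ℂ (hP.1.eigenvectorBasis i) (hP.1.eigenvectorBasis i) : ℂ) = 1 := by
      rw [@inner_self_eq_norm_sq_to_K ℂ, this]; norm_num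
    rw [EuclideanSpace.inner_eq_star_dotProduct, dotProduct_comm] at h2
    simpa [hq] using congrArg Complex.re h2
  have hBq : ∀ i, ((star (B *ᵥ q i)) ⬝ᵥ (B *ᵥ q i)).re = hP.1.eigenvalues i := by
    intro i
    rw [Matrix.star_mulVec, ← Matrix.dotProduct_mulVec, Matrix.mulVec_mulVec,
      hP.1.mulVec_eigenvectorBasis]
    have : (star (q i)) ⬝ᵥ (hP.1.eigenvalues i • q i)
        = (hP.1.eigenvalues i : ℂ) * ((star (q i)) ⬝ᵥ (q i)) := by
      simp only [dotProduct, Finset.mul_sum, Pi.smul_apply, Complex.real_smul,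
        Pi.star_apply]
      exact Finset.sum_congr rfl fun _ _ => by ring
    rw [this]
    simp only [Complex.mul_re, Complex.ofReal_re, Complex.ofReal_im, zero_mul, sub_zero]
    rw [hqq i]; ring
  have key : Matrix.trace (W * B) = ∑ i, ((star (q i)) ⬝ᵥ ((W * B) *ᵥ (q i))) := by
    have h1 : Matrix.trace (W * B) = Matrix.trace ((star (hP.1.eigenvectorUnitary : Matrix n n ℂ)) * (W * B) * (hP.1.eigenvectorUnitary : Matrix n n ℂ)) := by
      have hQ : (hP.1.eigenvectorUnitary : Matrix n n ℂ) * star (hP.1.eigenvectorUnitary : Matrix n n ℂ) = 1 := by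
        rw [← Unitary.coe_star]; exact Unitary.coe_mul_star_self _
      rw [Matrix.trace_mul_cycle, Matrix.mul_assoc, ← Matrix.mul_assoc, hQ, Matrix.one_mul]
    rw [h1, Matrix.trace]
    apply Finset.sum_congr rfl
    intro i _
    rw [Matrix.diag_apply, Matrix.star_eq_conjTranspose, trace_conj_entry]
    congr 1
  rw [key, Complex.re_sum]
  calc ∑ i, ((star (q i)) ⬝ᵥ ((W * B) *ᵥ (q i))).re
      ≤ ∑ i, Real.sqrt (hP.1.eigenvalues i) := by
        apply Finset.sum_le_sum
        intro i _
        have e1 : (W * B) *ᵥ (q i) = W *ᵥ (B *ᵥ q i) := (Matrix.mulVec_mulVec _ _ _).symm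
        have e2 : (star (q i)) ⬝ᵥ (W *ᵥ (B *ᵥ q i)) = (star (Wᴴ *ᵥ q i)) ⬝ᵥ (B *ᵥ q i) := by
          rw [Matrix.star_mulVec, Matrix.conjTranspose_conjTranspose, Matrix.dotProduct_mulVec]
        have cs := dot_cs (Wᴴ *ᵥ q i) (B *ᵥ q i)
        have hle : Real.sqrt ((star (Wᴴ *ᵥ q i) ⬝ᵥ (Wᴴ *ᵥ q i)).re) ≤ 1 := by
          have := hW (q i)
          calc Real.sqrt ((star (Wᴴ *ᵥ q i) ⬝ᵥ (Wᴴ *ᵥ q i)).re)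
              ≤ Real.sqrt ((star (q i) ⬝ᵥ (q i)).re) := Real.sqrt_le_sqrt this
            _ = 1 := by rw [hqq i]; exact Real.sqrt_one
        calc ((star (q i)) ⬝ᵥ ((W * B) *ᵥ (q i))).re
            ≤ ‖((star (q i)) ⬝ᵥ ((W * B) *ᵥ (q i)))‖ := Complex.re_le_norm _
          _ = ‖((star (Wᴴ *ᵥ q i)) ⬝ᵥ (B *ᵥ q i))‖ := by rw [e1, e2]
          _ ≤ Real.sqrt ((star (Wᴴ *ᵥ q i) ⬝ᵥ (Wᴴ *ᵥ q i)).re) * Real.sqrt ((star (B *ᵥ q i) ⬝ᵥ (B *ᵥ q i)).re) := cs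
          _ ≤ 1 * Real.sqrt ((star (B *ᵥ q i) ⬝ᵥ (B *ᵥ q i)).re) := by
              apply mul_le_mul_of_nonneg_right hle (Real.sqrt_nonneg _)
          _ = Real.sqrt (hP.1.eigenvalues i) := by rw [one_mul, hBq i]
    _ = traceNorm B := (traceNorm_eq_sum B).symm

lemma inv_sqrt_mul_self {x : ℝ} (hx : 0 ≤ x) : (Real.sqrt x)⁻¹ * x = Real.sqrt x := by
  rcases eq_or_lt_of_le hx with h | h
  · simp [← h]
  · have hs : Real.sqrt x ≠ 0 := ne_of_gt (Real.sqrt_pos.mpr h)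
    rw [inv_mul_eq_div, div_eq_iff hs]
    exact (Real.mul_self_sqrt hx).symm

lemma dot_self_adjoint (M : Matrix n n ℂ) (v : n → ℂ) :
    (star (Mᴴ *ᵥ v)) ⬝ᵥ (Mᴴ *ᵥ v) = (star v) ⬝ᵥ ((M * Mᴴ) *ᵥ v) := by
  rw [Matrix.star_mulVec, Matrix.conjTranspose_conjTranspose, ← Matrix.mulVec_mulVec,
    Matrix.dotProduct_mulVec, Matrix.dotProduct_mulVec, Matrix.dotProduct_mulVec]

lemma exists_dual_attain (B : Matrix n n ℂ) :
    ∃ W : Matrix n n ℂ, (∀ v : n → ℂ, ((star (Wᴴ *ᵥ v)) ⬝ᵥ (Wᴴ *ᵥ v)).re ≤ ((star v) ⬝ᵥ v).re)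
      ∧ (Matrix.trace (W * B)).re = traceNorm B := by
  have hP := Matrix.posSemidef_conjTranspose_mul_self B
  have hd : ∀ i, 0 ≤ hP.1.eigenvalues i := hP.eigenvalues_nonneg
  set Q : Matrix n n ℂ := (hP.1.eigenvectorUnitary : Matrix n n ℂ) with hQdef
  set d : n → ℝ := hP.1.eigenvalues with hddef
  have hQ1 : Qᴴ * Q = 1 := Unitary.coe_star_mul_self _
  have hQ2 : Q * Qᴴ = 1 := by
    rw [← Matrix.star_eq_conjTranspose, ← Unitary.coe_star]
    exact Unitary.coe_mul_star_self _
  have spec : Bᴴ * B = Q * Matrix.diagonal (fun i => ((d i : ℝ) : ℂ)) * Qᴴ := hP.1.spectral_theorem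
  have conj : ∀ (E F : Matrix n n ℂ),
      (Q * E * Qᴴ) * (Q * F * Qᴴ) = Q * (E * F) * Qᴴ := by
    intro E F
    simp only [Matrix.mul_assoc]
    rw [← Matrix.mul_assoc Qᴴ Q, hQ1, Matrix.one_mul]
  set D' : Matrix n n ℂ := Matrix.diagonal (fun i => (((Real.sqrt (d i))⁻¹ : ℝ) : ℂ)) with hD'def
  set X : Matrix n n ℂ := Q * D' * Qᴴ with hXdef
  have hD'H : D'ᴴ = D' := by
    rw [hD'def, Matrix.diagonal_conjTranspose]
    refine congrArg _ (funext fun i => ?_)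
    simp
  have hXH : Xᴴ = X := by
    rw [hXdef, Matrix.conjTranspose_mul, Matrix.conjTranspose_mul,
      Matrix.conjTranspose_conjTranspose, hD'H, Matrix.mul_assoc]
  refine ⟨X * Bᴴ, ?_, ?_⟩
  · -- contraction
    intro v
    set e : n → ℝ := fun i => (Real.sqrt (d i))⁻¹ * d i * (Real.sqrt (d i))⁻¹ with hedef
    have hei : ∀ i, e i = (Real.sqrt (d i))⁻¹ * d i * (Real.sqrt (d i))⁻¹ := fun i => rfl
    have he : ∀ i, e i = Real.sqrt (d i) * (Real.sqrt (d i))⁻¹ := by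
      intro i
      rw [hei i, inv_sqrt_mul_self (hd i)]
    have he0 : ∀ i, 0 ≤ e i := by
      intro i
      rw [he i]
      positivity
    have he1 : ∀ i, e i ≤ 1 := by
      intro i
      rcases eq_or_ne (Real.sqrt (d i)) 0 with hz | hz
      · rw [he i, hz]; norm_num
      · rw [he i, mul_inv_cancel₀ hz]
    have hdiag : (D' * Matrix.diagonal (fun i => ((d i : ℝ) : ℂ))) * D'
        = Matrix.diagonal (fun i => ((e i : ℝ) : ℂ)) := by
      rw [hD'def, Matrix.diagonal_mul_diagonal, Matrix.diagonal_mul_diagonal]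
      refine congrArg _ (funext fun i => ?_)
      rw [hei i]
      push_cast
      ring
    have hWWH : (X * Bᴴ) * (X * Bᴴ)ᴴ = Q * Matrix.diagonal (fun i => ((e i : ℝ) : ℂ)) * Qᴴ := by
      rw [Matrix.conjTranspose_mul, Matrix.conjTranspose_conjTranspose, hXH]
      have h1 : (X * Bᴴ) * (B * X) = X * (Bᴴ * B) * X := by simp only [Matrix.mul_assoc]
      rw [h1, spec, hXdef, conj, conj, hdiag]
    rw [dot_self_adjoint, hWWH]
    set w : n → ℂ := Qᴴ *ᵥ v with hwdef
    have hsw : star v ᵥ* Q = star w := by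
      rw [hwdef, Matrix.star_mulVec, Matrix.conjTranspose_conjTranspose]
    have step2 : (star v) ⬝ᵥ ((Q * Matrix.diagonal (fun i => ((e i : ℝ) : ℂ)) * Qᴴ) *ᵥ v)
        = (star w) ⬝ᵥ (Matrix.diagonal (fun i => ((e i : ℝ) : ℂ)) *ᵥ w) := by
      rw [← Matrix.mulVec_mulVec, ← Matrix.mulVec_mulVec, Matrix.dotProduct_mulVec, hsw]
    have step3 : (star w) ⬝ᵥ w = (star v) ⬝ᵥ v := by
      rw [hwdef, dot_self_adjoint, hQ2, Matrix.one_mulVec]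
    rw [step2, ← step3]
    simp only [dotProduct, Matrix.mulVec_diagonal, Pi.star_apply, Complex.re_sum]
    apply Finset.sum_le_sum
    intro i _
    have hns : (starRingEnd ℂ) (w i) * w i = (Complex.normSq (w i) : ℂ) := by
      rw [mul_comm]; exact Complex.mul_conj _
    have hlhs : ((starRingEnd ℂ) (w i) * ((e i : ℂ) * w i)).re = e i * Complex.normSq (w i) := by
      have h : (starRingEnd ℂ) (w i) * ((e i : ℂ) * w i)
          = (e i : ℂ) * ((starRingEnd ℂ) (w i) * w i) := by ring
      rw [h, hns, ← Complex.ofReal_mul, Complex.ofReal_re]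
    have hrhs : ((starRingEnd ℂ) (w i) * w i).re = Complex.normSq (w i) := by
      rw [hns, Complex.ofReal_re]
    simp only [Complex.star_def]
    rw [hlhs, hrhs]
    calc e i * Complex.normSq (w i) ≤ 1 * Complex.normSq (w i) :=
          mul_le_mul_of_nonneg_right (he1 i) (Complex.normSq_nonneg _)
      _ = Complex.normSq (w i) := one_mul _
  · -- trace value
    have h1 : (X * Bᴴ) * B = X * (Bᴴ * B) := by simp only [Matrix.mul_assoc]
    have h2 : X * (Bᴴ * B) = Q * Matrix.diagonal (fun i => ((Real.sqrt (d i) : ℝ) : ℂ)) * Qᴴ := by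
      rw [hXdef, spec, conj, hD'def, Matrix.diagonal_mul_diagonal]
      refine congrArg (fun D => Q * D * Qᴴ) (congrArg _ (funext fun i => ?_))
      rw [← Complex.ofReal_mul, inv_sqrt_mul_self (hd i)]
    rw [h1, h2, Matrix.trace_mul_cycle, hQ1, Matrix.one_mul, Matrix.trace_diagonal,
      traceNorm_eq_sum]
    simp [← hddef, Complex.re_sum]

lemma traceNorm_add_le (A B : Matrix n n ℂ) :
    traceNorm (A + B) ≤ traceNorm A + traceNorm B := by
  obtain ⟨W, hW, hval⟩ := exists_dual_attain (A + B)
  have hsplit : Matrix.trace (W * (A + B)) = Matrix.trace (W * A) + Matrix.trace (W * B) := by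
    rw [Matrix.mul_add, Matrix.trace_add]
  calc traceNorm (A + B) = (Matrix.trace (W * (A + B))).re := hval.symm
    _ = (Matrix.trace (W * A)).re + (Matrix.trace (W * B)).re := by rw [hsplit, Complex.add_re]
    _ ≤ traceNorm A + traceNorm B := add_le_add (re_trace_mul_le W A hW) (re_trace_mul_le W B hW)

lemma posSemidef_real_smul {t : ℝ} (ht : 0 ≤ t) {S : Matrix n n ℂ} (hS : S.PosSemidef) :
    ((t : ℂ) • S).PosSemidef := by
  constructor
  · rw [Matrix.IsHermitian, Matrix.conjTranspose_smul, hS.1.eq]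
    congr 1
    simp
  · have ht' : (0 : ℂ) ≤ (t : ℂ) := by
      rw [Complex.le_def]
      simp [ht]
    exact (hS.smul ht').2

lemma traceNorm_smul (c : ℂ) (A : Matrix m n ℂ) :
    traceNorm (c • A) = ‖c‖ * traceNorm A := by
  have hP : (Aᴴ * A).PosSemidef := Matrix.posSemidef_conjTranspose_mul_self A
  have hP' : ((c • A)ᴴ * (c • A)).PosSemidef := Matrix.posSemidef_conjTranspose_mul_self _
  have habs : (c • A)ᴴ * (c • A) = (‖c‖ ^ 2 : ℝ) • (Aᴴ * A) := by
    rw [Matrix.conjTranspose_smul, Matrix.smul_mul, Matrix.mul_smul, smul_smul,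
      ← algebraMap_smul ℂ (‖c‖ ^ 2 : ℝ) (Aᴴ * A)]
    congr 1
    rw [Complex.star_def, mul_comm, Complex.mul_conj, Complex.normSq_eq_norm_sq]
    simp
  have hkey : matSqrt ((c • A)ᴴ * (c • A)) = ‖c‖ • matSqrt (Aᴴ * A) := by
    rw [matSqrt_eq_cfc hP', matSqrt_eq_cfc hP, habs,
      ← cfc_comp_smul (‖c‖ ^ 2 : ℝ) Real.sqrt (Aᴴ * A) Real.continuous_sqrt.continuousOn
        hP.1.isSelfAdjoint,
      ← cfc_const_mul ‖c‖ Real.sqrt (Aᴴ * A) Real.continuous_sqrt.continuousOn]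
    congr 1
    funext x
    rw [smul_eq_mul, Real.sqrt_mul (by positivity), Real.sqrt_sq (norm_nonneg _)]
  rw [traceNorm, traceNorm, hkey, Matrix.trace_smul, Complex.smul_re, smul_eq_mul]

lemma expand_outer {r s : ℕ} (u v : ℂ) (M N : Matrix (Fin r) (Fin s) ℂ) :
    (u • M + v • N) * (u • M + v • N)ᴴ
      = (star u * u) • (M * Mᴴ) + (star v * u) • (M * Nᴴ)
        + (star u * v) • (N * Mᴴ) + (star v * v) • (N * Nᴴ) := by
  rw [Matrix.conjTranspose_add, Matrix.conjTranspose_smul, Matrix.conjTranspose_smul,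
    Matrix.add_mul, Matrix.mul_add, Matrix.mul_add]
  simp only [Matrix.smul_mul, Matrix.mul_smul, smul_smul]
  abel

lemma traceNorm_neg (A : Matrix m n ℂ) : traceNorm (-A) = traceNorm A := by
  have : -A = (-1 : ℂ) • A := by rw [neg_one_smul]
  rw [this, traceNorm_smul]
  simp


end Aux

/-- If `‖MM† - NN†‖₁ ≤ 2√2 ε` and for every unit pair `(u,v) ∈ ℂ²` we have
`‖(uM+vN)(uM+vN)† - NN†‖₁ ≤ 2√2 ε`, then `‖MN†‖₁ ≤ 6√2 ε` and `‖NM†‖₁ ≤ 6√2 ε`. -/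
theorem stmt5 {r s : ℕ} (M N : Matrix (Fin r) (Fin s) ℂ) (ε : ℝ) (hε : 0 ≤ ε)
    (h0 : traceNorm (M * Mᴴ - N * Nᴴ) ≤ 2 * Real.sqrt 2 * ε)
    (h1 : ∀ u v : ℂ, ‖u‖ ^ 2 + ‖v‖ ^ 2 = 1 →
      traceNorm ((u • M + v • N) * (u • M + v • N)ᴴ - N * Nᴴ) ≤ 2 * Real.sqrt 2 * ε) :
    traceNorm (M * Nᴴ) ≤ 6 * Real.sqrt 2 * ε ∧
      traceNorm (N * Mᴴ) ≤ 6 * Real.sqrt 2 * ε := by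
  set c : ℝ := (Real.sqrt 2)⁻¹ with hcdef
  set uc : ℂ := (c : ℂ) with hucdef
  have hs2 : Real.sqrt 2 * Real.sqrt 2 = 2 := Real.mul_self_sqrt (by norm_num)
  have hcc : c * c = 2⁻¹ := by rw [hcdef, ← mul_inv, hs2]
  have huc : uc * uc = (2⁻¹ : ℂ) := by
    rw [hucdef, ← Complex.ofReal_mul, hcc]
    norm_num
  have hstar : star uc = uc := by rw [hucdef]; exact Complex.conj_ofReal c
  have habsuc : ‖uc‖ ^ 2 = 2⁻¹ := by
    rw [hucdef, Complex.norm_real, Real.norm_eq_abs, _root_.sq_abs, sq, hcc]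
  have habs1 : ‖uc‖ ^ 2 + ‖uc‖ ^ 2 = 1 := by rw [habsuc]; norm_num
  have habs2 : ‖(Complex.I * uc)‖ ^ 2 + ‖uc‖ ^ 2 = 1 := by
    rw [norm_mul, Complex.norm_I, one_mul, habsuc]; norm_num
  have hstar2 : star (Complex.I * uc) = -Complex.I * uc := by
    rw [star_mul', hstar, Complex.star_def, Complex.conj_I]
  have c11 : (Complex.I * uc) * (-Complex.I * uc) = (2⁻¹ : ℂ) := by
    have h : (Complex.I * uc) * (-Complex.I * uc) = -(Complex.I * Complex.I) * (uc * uc) := by ring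
    rw [h, Complex.I_mul_I, huc]; ring
  have c12 : (Complex.I * uc) * uc = Complex.I * 2⁻¹ := by rw [mul_assoc, huc]
  have c21 : uc * (-Complex.I * uc) = -Complex.I * 2⁻¹ := by
    have h : uc * (-Complex.I * uc) = -Complex.I * (uc * uc) := by ring
    rw [h, huc]
  have E1 : (uc • M + uc • N) * (uc • M + uc • N)ᴴ
      = (2⁻¹ : ℂ) • (M * Mᴴ) + (2⁻¹ : ℂ) • (M * Nᴴ) + (2⁻¹ : ℂ) • (N * Mᴴ)
        + (2⁻¹ : ℂ) • (N * Nᴴ) := by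
    rw [expand_outer, hstar, huc]
  have k11 : star (Complex.I * uc) * (Complex.I * uc) = (2⁻¹ : ℂ) := by
    rw [hstar2]
    have h : -Complex.I * uc * (Complex.I * uc) = -(Complex.I * Complex.I) * (uc * uc) := by ring
    rw [h, Complex.I_mul_I, huc]; ring
  have k12 : star uc * (Complex.I * uc) = Complex.I * 2⁻¹ := by
    rw [hstar]
    have h : uc * (Complex.I * uc) = Complex.I * (uc * uc) := by ring
    rw [h, huc]
  have k21 : star (Complex.I * uc) * uc = -Complex.I * 2⁻¹ := by
    rw [hstar2]
    have h : -Complex.I * uc * uc = -Complex.I * (uc * uc) := by ring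
    rw [h, huc]
  have E2 : ((Complex.I * uc) • M + uc • N) * ((Complex.I * uc) • M + uc • N)ᴴ
      = (2⁻¹ : ℂ) • (M * Mᴴ) + (Complex.I * 2⁻¹) • (M * Nᴴ) + (-Complex.I * 2⁻¹) • (N * Mᴴ)
        + (2⁻¹ : ℂ) • (N * Nᴴ) := by
    rw [expand_outer, k11, k12, k21, hstar, huc]
  have idS : M * Nᴴ + N * Mᴴ
      = (2 : ℂ) • ((uc • M + uc • N) * (uc • M + uc • N)ᴴ - N * Nᴴ) - (M * Mᴴ - N * Nᴴ) := by
    rw [E1]; module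
  have idD0 : (2 : ℂ) • (((Complex.I * uc) • M + uc • N)
        * ((Complex.I * uc) • M + uc • N)ᴴ - N * Nᴴ) - (M * Mᴴ - N * Nᴴ)
      = Complex.I • (M * Nᴴ - N * Mᴴ) := by
    rw [E2]; module
  have idD : M * Nᴴ - N * Mᴴ
      = (-Complex.I) • ((2 : ℂ) • (((Complex.I * uc) • M + uc • N)
          * ((Complex.I * uc) • M + uc • N)ᴴ - N * Nᴴ) - (M * Mᴴ - N * Nᴴ)) := by
    rw [idD0, smul_smul]
    have h : -Complex.I * Complex.I = 1 := by
      rw [neg_mul, Complex.I_mul_I, neg_neg]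
    rw [h, one_smul]
  have bX1 := h1 uc uc habs1
  have bX2 := h1 (Complex.I * uc) uc habs2
  have habs2c : ‖(2 : ℂ)‖ = 2 := by norm_num
  have bS : traceNorm (M * Nᴴ + N * Mᴴ) ≤ 6 * Real.sqrt 2 * ε := by
    rw [idS, sub_eq_add_neg]
    refine (traceNorm_add_le _ _).trans ?_
    rw [traceNorm_smul, traceNorm_neg, habs2c]
    calc 2 * traceNorm ((uc • M + uc • N) * (uc • M + uc • N)ᴴ - N * Nᴴ)
          + traceNorm (M * Mᴴ - N * Nᴴ)
        ≤ 2 * (2 * Real.sqrt 2 * ε) + 2 * Real.sqrt 2 * ε :=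
          add_le_add (mul_le_mul_of_nonneg_left bX1 (by norm_num)) h0
      _ = 6 * Real.sqrt 2 * ε := by ring
  have bD : traceNorm (M * Nᴴ - N * Mᴴ) ≤ 6 * Real.sqrt 2 * ε := by
    rw [idD, traceNorm_smul]
    have habsI : ‖(-Complex.I)‖ = 1 := by simp
    rw [habsI, one_mul, sub_eq_add_neg]
    refine (traceNorm_add_le _ _).trans ?_
    rw [traceNorm_smul, traceNorm_neg, habs2c]
    calc 2 * traceNorm (((Complex.I * uc) • M + uc • N)
            * ((Complex.I * uc) • M + uc • N)ᴴ - N * Nᴴ)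
          + traceNorm (M * Mᴴ - N * Nᴴ)
        ≤ 2 * (2 * Real.sqrt 2 * ε) + 2 * Real.sqrt 2 * ε :=
          add_le_add (mul_le_mul_of_nonneg_left bX2 (by norm_num)) h0
      _ = 6 * Real.sqrt 2 * ε := by ring
  have habshalf : ‖((2 : ℂ)⁻¹)‖ = 2⁻¹ := by norm_num
  constructor
  · have hM : M * Nᴴ = (2⁻¹ : ℂ) • ((M * Nᴴ + N * Mᴴ) + (M * Nᴴ - N * Mᴴ)) := by module
    rw [hM, traceNorm_smul, habshalf]
    calc (2⁻¹ : ℝ) * traceNorm ((M * Nᴴ + N * Mᴴ) + (M * Nᴴ - N * Mᴴ))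
        ≤ 2⁻¹ * (traceNorm (M * Nᴴ + N * Mᴴ) + traceNorm (M * Nᴴ - N * Mᴴ)) :=
          mul_le_mul_of_nonneg_left (traceNorm_add_le _ _) (by norm_num)
      _ ≤ 2⁻¹ * (6 * Real.sqrt 2 * ε + 6 * Real.sqrt 2 * ε) :=
          mul_le_mul_of_nonneg_left (add_le_add bS bD) (by norm_num)
      _ = 6 * Real.sqrt 2 * ε := by ring
  · have hN : N * Mᴴ = (2⁻¹ : ℂ) • ((M * Nᴴ + N * Mᴴ) + (-(M * Nᴴ - N * Mᴴ))) := by module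
    rw [hN, traceNorm_smul, habshalf]
    calc (2⁻¹ : ℝ) * traceNorm ((M * Nᴴ + N * Mᴴ) + (-(M * Nᴴ - N * Mᴴ)))
        ≤ 2⁻¹ * (traceNorm (M * Nᴴ + N * Mᴴ) + traceNorm (-(M * Nᴴ - N * Mᴴ))) :=
          mul_le_mul_of_nonneg_left (traceNorm_add_le _ _) (by norm_num)
      _ ≤ 2⁻¹ * (6 * Real.sqrt 2 * ε + 6 * Real.sqrt 2 * ε) := by
          rw [traceNorm_neg]
          exact mul_le_mul_of_nonneg_left (add_le_add bS bD) (by norm_num)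
      _ = 6 * Real.sqrt 2 * ε := by ring
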